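/- Let (X, (U_x)_{x∈X}) be a Moufang set with little projective group G, fix distinct 0, ∞ ∈ X, set U := X \ {∞} with the group operation a + b := a·α_b, and fix τ ∈ G with 0·τ = ∞ and ∞·τ = 0; set γ_a := τ⁻¹ α_a τ. Let φ be a group automorphism of (U, +), extended to a permutation of X by ∞·φ := ∞. Then there exists an automorphism χ of G with χ(α_a) = γ_{a·φ} and χ(γ_a) = α_{a·φ⁻¹} for all a ∈ U if and only if (φ∘τ)∘(φ∘τ) = id as a permutation of X. Moreover, in this case χ is involutory (χ ∘ χ = id) and φ is an automorphism of the Moufang set, i.e. φ⁻¹ U_x φ = U_{x·φ} for all x ∈ X. -/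

import Mathlib

/-- A Moufang set: a set `X` with a family of subgroups `U x ≤ Sym(X)` (the
root groups), each fixing `x` and acting sharply transitively on `X \ {x}`,
such that conjugation by any root element permutes the root groups
accordingly.  Permutations act on the right, so the paper's `x·g` is `g x` and
the paper's product `g·h` (first `g`, then `h`) is `h * g` in Lean. -/
structure MoufangSet (X : Type*) where
  U : X → Subgroup (Equiv.Perm X)
  fixes : ∀ x : X, ∀ g ∈ U x, g x = x
  regular : ∀ x y z : X, y ≠ x → z ≠ x → ∃! g : Equiv.Perm X, g ∈ U x ∧ g y = z
  conj : ∀ x y : X, ∀ g ∈ U x,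
    Subgroup.map (MulAut.conj g).toMonoidHom (U y) = U (g y)

/-- The little projective group of a Moufang set. -/
def MoufangSet.lpg {X : Type*} (M : MoufangSet X) : Subgroup (Equiv.Perm X) :=
  Subgroup.closure (⋃ x : X, (M.U x : Set (Equiv.Perm X)))

theorem Equiv.Perm.apply_inv_self {α : Type*} (f : Equiv.Perm α) (x : α) : f (f⁻¹ x) = x :=
  f.apply_symm_apply x

theorem Equiv.Perm.inv_apply_self {α : Type*} (f : Equiv.Perm α) (x : α) : f⁻¹ (f x) = x :=
  f.symm_apply_apply x

namespace MSAux

variable {X : Type*}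

lemma mem_lpg (M : MoufangSet X) {x : X} {g : Equiv.Perm X} (hg : g ∈ M.U x) : g ∈ M.lpg :=
  Subgroup.subset_closure (Set.mem_iUnion.2 ⟨x, hg⟩)

lemma conj_iff (M : MoufangSet X) {g : Equiv.Perm X} (hg : g ∈ M.lpg) :
    ∀ (y : X) (h : Equiv.Perm X), h ∈ M.U y ↔ g * h * g⁻¹ ∈ M.U (g y) := by
  induction hg using Subgroup.closure_induction with
  | mem x hx =>
    obtain ⟨s, hs⟩ := Set.mem_iUnion.1 hx
    intro y h
    constructor
    · intro hh
      have hmap := M.conj s y x hs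
      have hmem : (MulAut.conj x).toMonoidHom h ∈
          Subgroup.map (MulAut.conj x).toMonoidHom (M.U y) :=
        Subgroup.mem_map_of_mem _ hh
      rw [hmap] at hmem
      simpa using hmem
    · intro hh
      have hmap := M.conj s y x hs
      rw [← hmap] at hh
      obtain ⟨h', hh', he⟩ := Subgroup.mem_map.1 hh
      have he' : x * h' * x⁻¹ = x * h * x⁻¹ := by simpa using he
      have : h' = h := mul_left_cancel (mul_right_cancel he')
      rwa [← this]
  | one => intro y h; simp
  | mul g₁ g₂ hg₁ hg₂ ih₁ ih₂ =>
    intro y h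
    have e1 : g₁ * g₂ * h * (g₁ * g₂)⁻¹ = g₁ * (g₂ * h * g₂⁻¹) * g₁⁻¹ := by group
    have e2 : (g₁ * g₂) y = g₁ (g₂ y) := Equiv.Perm.mul_apply _ _ _
    rw [e1, e2, ← ih₁ (g₂ y) (g₂ * h * g₂⁻¹), ← ih₂ y h]
  | inv g hg ih =>
    intro y h
    have h1 := ih (g⁻¹ y) (g⁻¹ * h * g)
    have e1 : g * (g⁻¹ * h * g) * g⁻¹ = h := by group
    have e2 : g (g⁻¹ y) = y := Equiv.Perm.apply_inv_self _ _
    rw [e1, e2] at h1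
    rw [inv_inv]
    exact h1.symm

lemma fixed_unique (M : MoufangSet X) {x y : X} {g : Equiv.Perm X}
    (hg : g ∈ M.U x) (hg1 : g ≠ 1) (hy : g y = y) : y = x := by
  by_contra hxy
  obtain ⟨k, _, huniq⟩ := M.regular x y y hxy hxy
  have h1 : g = k := huniq g ⟨hg, hy⟩
  have h2 : (1 : Equiv.Perm X) = k := huniq 1 ⟨one_mem _, rfl⟩
  exact hg1 (h1.trans h2.symm)

lemma exists_third (M : MoufangSet X) (zero infty : X) (hne : zero ≠ infty)
    (τ : Equiv.Perm X) (hτG : τ ∈ M.lpg) (hτ0 : τ zero = infty) :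
    ∃ c : X, c ≠ zero ∧ c ≠ infty := by
  by_contra hc
  push_neg at hc
  have hall : ∀ c : X, c = zero ∨ c = infty := by
    intro c
    by_cases h : c = zero
    · exact Or.inl h
    · exact Or.inr (hc c h)
  have hU : ∀ x : X, ∀ g ∈ M.U x, g = (1 : Equiv.Perm X) := by
    intro x g hg
    have hfx := M.fixes x g hg
    refine Equiv.ext fun y => ?_
    by_cases hyx : y = x
    · rw [hyx, hfx]; rfl
    · have hgy : g y ≠ x := by
        intro h
        exact hyx (g.injective (h.trans hfx.symm))
      rcases hall y with h2 | h2 <;> rcases hall (g y) with h1 | h1 <;>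
        rcases hall x with h3 | h3 <;>
        simp only [Equiv.Perm.one_apply] <;>
        first
          | (exact absurd (h1.trans h3.symm) hgy)
          | (exact absurd (h2.trans h3.symm) hyx)
          | (rw [h1, h2])
  have hlpg : M.lpg ≤ ⊥ := by
    refine (Subgroup.closure_le _).2 ?_
    intro g hg
    obtain ⟨s, hs⟩ := Set.mem_iUnion.1 hg
    simpa [Subgroup.mem_bot] using hU s g hs
  have : τ = 1 := by simpa [Subgroup.mem_bot] using hlpg hτG
  rw [this] at hτ0
  exact hne hτ0

lemma exists_nontrivial (M : MoufangSet X) (zero infty : X) (hne : zero ≠ infty)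
    (τ : Equiv.Perm X) (hτG : τ ∈ M.lpg) (hτ0 : τ zero = infty) (x : X) :
    ∃ g : Equiv.Perm X, g ∈ M.U x ∧ g ≠ 1 := by
  obtain ⟨c, hc0, hci⟩ := exists_third M zero infty hne τ hτG hτ0
  obtain ⟨y, z, hyx, hzx, hyz⟩ : ∃ y z : X, y ≠ x ∧ z ≠ x ∧ y ≠ z := by
    by_cases h0 : x = zero
    · exact ⟨infty, c, by rw [h0]; exact fun h => hne h.symm, by rw [h0]; exact hc0,
        fun h => hci h.symm⟩
    · by_cases hi : x = infty
      · exact ⟨zero, c, by rw [hi]; exact hne, by rw [hi]; exact hci, fun h => hc0 h.symm⟩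
      · exact ⟨zero, infty, fun h => h0 h.symm, fun h => hi h.symm, hne⟩
  obtain ⟨g, ⟨hg, hgyz⟩, _⟩ := M.regular x y z hyx hzx
  refine ⟨g, hg, fun h => ?_⟩
  rw [h] at hgyz
  exact hyz hgyz

section Main
set_option linter.unusedSectionVars false

variable (M : MoufangSet X) (zero infty : X) (hne : zero ≠ infty)
  (α : X → Equiv.Perm X)
  (hα : ∀ a : X, a ≠ infty → α a ∈ M.U infty ∧ α a zero = a)
  (τ : Equiv.Perm X) (hτG : τ ∈ M.lpg) (hτ0 : τ zero = infty) (hτi : τ infty = zero)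
  (φ : Equiv.Perm X) (hφinfty : φ infty = infty)
  (hφadd : ∀ a b : X, a ≠ infty → b ≠ infty → φ (α b a) = α (φ b) (φ a))

include hα in
lemma alpha_infty {a : X} (ha : a ≠ infty) : α a infty = infty :=
  M.fixes infty (α a) (hα a ha).1

include hne hα in
lemma mem_Uinfty_eq {g : Equiv.Perm X} (hg : g ∈ M.U infty) :
    g zero ≠ infty ∧ g = α (g zero) := by
  have h1 : g infty = infty := M.fixes _ _ hg
  have h2 : g zero ≠ infty := fun h => hne (g.injective (h.trans h1.symm))
  obtain ⟨k, _, huniq⟩ := M.regular infty zero (g zero) hne h2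
  have e1 := huniq g ⟨hg, rfl⟩
  have e2 := huniq (α (g zero)) ⟨(hα _ h2).1, (hα _ h2).2⟩
  exact ⟨h2, e1.trans e2.symm⟩

include hφinfty in
lemma phi_ne {a : X} (ha : a ≠ infty) : φ a ≠ infty :=
  fun h => ha (φ.injective (h.trans hφinfty.symm))

include hφinfty in
lemma phi_inv_infty : φ⁻¹ infty = infty :=
  φ.injective (by rw [Equiv.Perm.apply_inv_self, hφinfty])

include hφinfty in
lemma phi_inv_ne {a : X} (ha : a ≠ infty) : φ⁻¹ a ≠ infty :=
  fun h => ha (by rw [← φ.apply_inv_self a, h, hφinfty])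

include hne hα hφinfty hφadd in
lemma phi_zero : φ zero = zero := by
  have h := hφadd zero zero hne hne
  rw [(hα zero hne).2] at h
  have h2 : α (φ zero) zero = φ zero := (hα (φ zero) (phi_ne infty φ hφinfty hne)).2
  exact (α (φ zero)).injective (by rw [h2, ← h])

include hne hα hφinfty hφadd in
lemma conj_alpha {a : X} (ha : a ≠ infty) : φ * α a * φ⁻¹ = α (φ a) := by
  refine Equiv.ext fun x => ?_
  simp only [Equiv.Perm.mul_apply]
  by_cases hx : x = infty
  · rw [hx, phi_inv_infty infty φ hφinfty, alpha_infty M zero infty α hα ha, hφinfty,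
      alpha_infty M zero infty α hα (phi_ne infty φ hφinfty ha)]
  · have h1 : φ⁻¹ x ≠ infty := phi_inv_ne infty φ hφinfty hx
    rw [hφadd (φ⁻¹ x) a h1 ha, φ.apply_inv_self]

include hne hα hφinfty hφadd in
lemma conj_alpha_inv {a : X} (ha : a ≠ infty) : φ⁻¹ * α a * φ = α (φ⁻¹ a) := by
  have h := conj_alpha M zero infty hne α hα φ hφinfty hφadd
    (phi_inv_ne infty φ hφinfty ha)
  rw [φ.apply_inv_self] at h
  rw [← h]; group

include hτi in
lemma tau_inv_zero : τ⁻¹ zero = infty := by rw [← hτi, Equiv.Perm.inv_apply_self]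

include hτ0 in
lemma tau_inv_infty : τ⁻¹ infty = zero := by rw [← hτ0, Equiv.Perm.inv_apply_self]

include hα hτG hτi in
lemma gamma_mem {a : X} (ha : a ≠ infty) : τ * α a * τ⁻¹ ∈ M.U zero := by
  have h := (conj_iff M hτG infty (α a)).1 (hα a ha).1
  rwa [hτi] at h

include hne hα hτG hτ0 hτi in
lemma mem_Uzero_eq {g : Equiv.Perm X} (hg : g ∈ M.U zero) :
    ∃ a : X, a ≠ infty ∧ g = τ * α a * τ⁻¹ := by
  have h1 : τ⁻¹ * g * τ ∈ M.U infty := by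
    have h := (conj_iff M (inv_mem hτG) zero g).1 hg
    rwa [inv_inv, tau_inv_zero zero infty τ hτi] at h
  obtain ⟨hb, he⟩ := mem_Uinfty_eq M zero infty hne α hα h1
  refine ⟨(τ⁻¹ * g * τ) zero, hb, ?_⟩
  rw [← he]; group

include hne hα in
lemma lpg_eq : M.lpg =
    Subgroup.closure ((M.U zero : Set (Equiv.Perm X)) ∪ (M.U infty : Set (Equiv.Perm X))) := by
  apply le_antisymm
  · refine (Subgroup.closure_le _).2 ?_
    intro g hg
    obtain ⟨s, hs⟩ := Set.mem_iUnion.1 hg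
    by_cases hsi : s = infty
    · exact Subgroup.subset_closure (Or.inr (by rw [← hsi]; exact hs))
    · have hαs := hα s hsi
      have hsz : (α s)⁻¹ s = zero := by rw [Equiv.Perm.inv_eq_iff_eq]; exact hαs.2.symm
      have hg0 : (α s)⁻¹ * g * α s ∈ M.U zero := by
        have h := (conj_iff M (inv_mem (mem_lpg M hαs.1)) s g).1 hs
        rwa [inv_inv, hsz] at h
      have hrw : g = α s * ((α s)⁻¹ * g * α s) * (α s)⁻¹ := by group
      show g ∈ Subgroup.closure _
      rw [hrw]
      exact mul_mem (mul_mem (Subgroup.subset_closure (Or.inr hαs.1))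
        (Subgroup.subset_closure (Or.inl hg0)))
        (inv_mem (Subgroup.subset_closure (Or.inr hαs.1)))
  · refine (Subgroup.closure_le _).2 ?_
    rintro g (hg | hg)
    · exact mem_lpg M hg
    · exact mem_lpg M hg

include hne hα in
lemma lpg_induction {p : Equiv.Perm X → Prop}
    (h0 : ∀ g ∈ M.U zero, p g) (hi : ∀ g ∈ M.U infty, p g)
    (h1 : p 1) (hm : ∀ g h, p g → p h → p (g * h)) (hv : ∀ g, p g → p g⁻¹) :
    ∀ g ∈ M.lpg, p g := by
  intro g hg
  rw [lpg_eq M zero infty hne α hα] at hg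
  induction hg using Subgroup.closure_induction with
  | mem x hx => rcases hx with h | h
                · exact h0 x h
                · exact hi x h
  | one => exact h1
  | mul a b _ _ pa pb => exact hm a b pa pb
  | inv a _ pa => exact hv a pa

include hα hτ0 in
lemma gamma_apply_infty {a : X} (ha : a ≠ infty) : (τ * α a * τ⁻¹) infty = τ a := by
  simp only [Equiv.Perm.mul_apply]
  rw [tau_inv_infty zero infty τ hτ0, (hα a ha).2]

variable (χ : M.lpg ≃* M.lpg)
  (hχ1 : ∀ a : X, a ≠ infty → ∀ g : M.lpg, (g : Equiv.Perm X) = α a →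
          ((χ g : Equiv.Perm X) = τ * α (φ a) * τ⁻¹))
  (hχ2 : ∀ a : X, a ≠ infty → ∀ g : M.lpg, (g : Equiv.Perm X) = τ * α a * τ⁻¹ →
          ((χ g : Equiv.Perm X) = α (φ⁻¹ a)))

include hne hα hτG hτ0 hτi hφinfty hχ1 hχ2 in
lemma chi_invol : ∀ g : M.lpg, χ (χ g) = g := by
  have key : ∀ g ∈ M.lpg,
      (g ∈ M.lpg ∧ ∀ g₀ : M.lpg, (g₀ : Equiv.Perm X) = g → χ (χ g₀) = g₀) := by
    refine lpg_induction M zero infty hne α hα ?_ ?_ ?_ ?_ ?_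
    · intro g hg
      refine ⟨mem_lpg M hg, fun g₀ hval => ?_⟩
      obtain ⟨a, ha, he⟩ := mem_Uzero_eq M zero infty hne α hα τ hτG hτ0 hτi hg
      have e1 := hχ2 a ha g₀ (by rw [hval, he])
      have e2 := hχ1 (φ⁻¹ a) (phi_inv_ne infty φ hφinfty ha) (χ g₀) e1
      refine Subtype.ext ?_
      rw [e2, Equiv.Perm.apply_inv_self, hval]
      exact he.symm
    · intro g hg
      refine ⟨mem_lpg M hg, fun g₀ hval => ?_⟩
      obtain ⟨hb, he⟩ := mem_Uinfty_eq M zero infty hne α hα hg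
      have e1 := hχ1 (g zero) hb g₀ (by rw [hval]; exact he)
      have e2 := hχ2 (φ (g zero)) (phi_ne infty φ hφinfty hb) (χ g₀) e1
      refine Subtype.ext ?_
      rw [e2, Equiv.Perm.inv_apply_self, hval]
      exact he.symm
    · refine ⟨one_mem _, fun g₀ hval => ?_⟩
      have h1 : g₀ = 1 := Subtype.ext hval
      rw [h1, map_one, map_one]
    · intro g h pg ph
      refine ⟨mul_mem pg.1 ph.1, fun g₀ hval => ?_⟩
      have h1 : g₀ = (⟨g, pg.1⟩ : M.lpg) * ⟨h, ph.1⟩ := Subtype.ext hval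
      rw [h1, map_mul, map_mul, pg.2 ⟨g, pg.1⟩ rfl, ph.2 ⟨h, ph.1⟩ rfl]
    · intro g pg
      refine ⟨inv_mem pg.1, fun g₀ hval => ?_⟩
      have h1 : g₀ = (⟨g, pg.1⟩ : M.lpg)⁻¹ := Subtype.ext hval
      rw [h1, map_inv, map_inv, pg.2 ⟨g, pg.1⟩ rfl]
  intro g
  exact (key g.1 g.2).2 g rfl

include hne hα hτG hτ0 hτi hφinfty hχ1 hχ2 in
lemma chi_mem : ∀ (y : X) (gs : M.lpg), (gs : Equiv.Perm X) ∈ M.U y →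
    (χ gs : Equiv.Perm X) ∈ M.U (τ (φ y)) := by
  intro y gs hmem
  by_cases hyi : y = infty
  · rw [hyi] at hmem
    obtain ⟨hb, he⟩ := mem_Uinfty_eq M zero infty hne α hα hmem
    have e1 := hχ1 _ hb gs he
    rw [hyi, e1, hφinfty, hτi]
    exact gamma_mem M zero infty α hα τ hτG hτi (phi_ne infty φ hφinfty hb)
  · have hαy := hα y hyi
    have hyz : (α y)⁻¹ y = zero := by rw [Equiv.Perm.inv_eq_iff_eq]; exact hαy.2.symm
    have hk : (α y)⁻¹ * (gs : Equiv.Perm X) * α y ∈ M.U zero := by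
      have h := (conj_iff M (inv_mem (mem_lpg M hαy.1)) y gs).1 hmem
      rwa [inv_inv, hyz] at h
    obtain ⟨b, hb, he⟩ := mem_Uzero_eq M zero infty hne α hα τ hτG hτ0 hτi hk
    have hgs : gs = (⟨α y, mem_lpg M hαy.1⟩ : M.lpg) *
        ⟨(α y)⁻¹ * (gs : Equiv.Perm X) * α y, mem_lpg M hk⟩ *
        (⟨α y, mem_lpg M hαy.1⟩ : M.lpg)⁻¹ := by
      refine Subtype.ext ?_
      show (gs : Equiv.Perm X) = α y * ((α y)⁻¹ * (gs : Equiv.Perm X) * α y) * (α y)⁻¹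
      group
    have eA := hχ1 y hyi (⟨α y, mem_lpg M hαy.1⟩ : M.lpg) rfl
    have eB := hχ2 b hb (⟨(α y)⁻¹ * (gs : Equiv.Perm X) * α y, mem_lpg M hk⟩ : M.lpg) he
    rw [hgs, map_mul, map_mul, map_inv]
    have hcoe : ((χ ⟨α y, mem_lpg M hαy.1⟩ * χ ⟨(α y)⁻¹ * (gs : Equiv.Perm X) * α y, mem_lpg M hk⟩
        * (χ ⟨α y, mem_lpg M hαy.1⟩)⁻¹ : M.lpg) : Equiv.Perm X)
        = (χ ⟨α y, mem_lpg M hαy.1⟩ : Equiv.Perm X) *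
          (χ ⟨(α y)⁻¹ * (gs : Equiv.Perm X) * α y, mem_lpg M hk⟩ : Equiv.Perm X) *
          (χ ⟨α y, mem_lpg M hαy.1⟩ : Equiv.Perm X)⁻¹ := rfl
    rw [hcoe, eA, eB]
    have hφy := phi_ne infty φ hφinfty hyi
    have hmemB : α (φ⁻¹ b) ∈ M.U infty := (hα _ (phi_inv_ne infty φ hφinfty hb)).1
    have hconj := (conj_iff M
      (mem_lpg M (gamma_mem M zero infty α hα τ hτG hτi hφy)) infty (α (φ⁻¹ b))).1 hmemB
    rwa [gamma_apply_infty M zero infty α hα τ hτ0 hφy] at hconj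

omit χ hχ1 hχ2

lemma map_conj_eq (u : Equiv.Perm X) (K L : Subgroup (Equiv.Perm X))
    (hiff : ∀ g, g ∈ K ↔ u * g * u⁻¹ ∈ L) :
    Subgroup.map (MulAut.conj u).toMonoidHom K = L := by
  ext h
  simp only [Subgroup.mem_map]
  constructor
  · rintro ⟨k, hk, rfl⟩
    simpa using (hiff k).1 hk
  · intro hh
    refine ⟨u⁻¹ * h * u, (hiff _).2 ?_, ?_⟩
    · have e : u * (u⁻¹ * h * u) * u⁻¹ = h := by group
      rw [e]; exact hh
    · have e : u * (u⁻¹ * h * u) * u⁻¹ = h := by group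
      simpa using e

lemma conj_conj (u : Equiv.Perm X) (hu : u * u = 1) (h : Equiv.Perm X) :
    u * (u * h * u⁻¹) * u⁻¹ = h := by
  have e : u * (u * h * u⁻¹) * u⁻¹ = (u * u) * h * (u * u)⁻¹ := by group
  rw [e, hu]; simp

variable (hk : ∀ x : X, τ (φ (τ (φ x))) = x)

include hk in
lemma sig_sq : (τ * φ) * (τ * φ) = 1 := by
  refine Equiv.ext fun x => ?_
  simpa [Equiv.Perm.mul_apply] using hk x

include hk in
lemma phitau : φ * τ = τ⁻¹ * φ⁻¹ := by
  calc φ * τ = τ⁻¹ * ((τ * φ) * (τ * φ)) * φ⁻¹ := by group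
    _ = τ⁻¹ * φ⁻¹ := by rw [sig_sq τ φ hk]; group

include hk in
lemma tpt : τ * φ * τ = φ⁻¹ := by
  calc τ * φ * τ = ((τ * φ) * (τ * φ)) * φ⁻¹ := by group
    _ = φ⁻¹ := by rw [sig_sq τ φ hk]; group

include hne hα hφinfty hφadd in
lemma conj_sigma_alpha {a : X} (ha : a ≠ infty) :
    (τ * φ) * α a * (τ * φ)⁻¹ = τ * α (φ a) * τ⁻¹ := by
  calc (τ * φ) * α a * (τ * φ)⁻¹ = τ * (φ * α a * φ⁻¹) * τ⁻¹ := by group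
    _ = τ * α (φ a) * τ⁻¹ := by rw [conj_alpha M zero infty hne α hα φ hφinfty hφadd ha]

include hne hα hφinfty hφadd hk in
lemma conj_sigma_gamma {a : X} (ha : a ≠ infty) :
    (τ * φ) * (τ * α a * τ⁻¹) * (τ * φ)⁻¹ = α (φ⁻¹ a) := by
  calc (τ * φ) * (τ * α a * τ⁻¹) * (τ * φ)⁻¹ = (τ * φ * τ) * α a * (τ * φ * τ)⁻¹ := by group
    _ = φ⁻¹ * α a * (φ⁻¹)⁻¹ := by rw [tpt τ φ hk]
    _ = α (φ⁻¹ a) := by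
        rw [inv_inv]; exact conj_alpha_inv M zero infty hne α hα φ hφinfty hφadd ha

include hne hα hτG hτ0 hτi hφinfty hφadd hk in
lemma sig_norm : ∀ g ∈ M.lpg, (τ * φ) * g * (τ * φ)⁻¹ ∈ M.lpg := by
  refine lpg_induction M zero infty hne α hα ?_ ?_ ?_ ?_ ?_
  · intro g hg
    obtain ⟨a, ha, he⟩ := mem_Uzero_eq M zero infty hne α hα τ hτG hτ0 hτi hg
    rw [he, conj_sigma_gamma M zero infty hne α hα τ φ hφinfty hφadd hk ha]
    exact mem_lpg M (hα _ (phi_inv_ne infty φ hφinfty ha)).1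
  · intro g hg
    obtain ⟨hb, he⟩ := mem_Uinfty_eq M zero infty hne α hα hg
    rw [he, conj_sigma_alpha M zero infty hne α hα τ φ hφinfty hφadd hb]
    exact mem_lpg M (gamma_mem M zero infty α hα τ hτG hτi (phi_ne infty φ hφinfty hb))
  · have e : (τ * φ) * 1 * (τ * φ)⁻¹ = 1 := by group
    rw [e]; exact one_mem _
  · intro g h pg ph
    have e : (τ * φ) * (g * h) * (τ * φ)⁻¹
        = ((τ * φ) * g * (τ * φ)⁻¹) * ((τ * φ) * h * (τ * φ)⁻¹) := by group
    rw [e]; exact mul_mem pg ph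
  · intro g pg
    have e : (τ * φ) * g⁻¹ * (τ * φ)⁻¹ = ((τ * φ) * g * (τ * φ)⁻¹)⁻¹ := by group
    rw [e]; exact inv_mem pg

include hne hα hτG hτ0 hτi hφinfty hφadd hk in
lemma d0fwd : ∀ g ∈ M.U zero, φ * g * φ⁻¹ ∈ M.U zero := by
  intro g hg
  obtain ⟨a, ha, he⟩ := mem_Uzero_eq M zero infty hne α hα τ hτG hτ0 hτi hg
  have e : φ * (τ * α a * τ⁻¹) * φ⁻¹ = τ⁻¹ * α (φ⁻¹ a) * (τ⁻¹)⁻¹ := by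
    calc φ * (τ * α a * τ⁻¹) * φ⁻¹ = (φ * τ) * α a * (φ * τ)⁻¹ := by group
      _ = (τ⁻¹ * φ⁻¹) * α a * (τ⁻¹ * φ⁻¹)⁻¹ := by rw [phitau τ φ hk]
      _ = τ⁻¹ * (φ⁻¹ * α a * (φ⁻¹)⁻¹) * (τ⁻¹)⁻¹ := by group
      _ = τ⁻¹ * α (φ⁻¹ a) * (τ⁻¹)⁻¹ := by
          rw [inv_inv, conj_alpha_inv M zero infty hne α hα φ hφinfty hφadd ha]
  rw [he, e]
  have h2 := (conj_iff M (inv_mem hτG) infty (α (φ⁻¹ a))).1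
    (hα _ (phi_inv_ne infty φ hφinfty ha)).1
  rwa [tau_inv_infty zero infty τ hτ0] at h2

include hne hα hτG hτ0 hτi hφinfty hφadd hk in
lemma d0bwd : ∀ g : Equiv.Perm X, φ * g * φ⁻¹ ∈ M.U zero → g ∈ M.U zero := by
  have d0inv : ∀ g ∈ M.U zero, φ⁻¹ * g * φ ∈ M.U zero := by
    intro g hg
    have h1 : τ * g * τ⁻¹ ∈ M.U infty := by
      have h := (conj_iff M hτG zero g).1 hg
      rwa [hτ0] at h
    obtain ⟨hb, he⟩ := mem_Uinfty_eq M zero infty hne α hα h1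
    have e : φ⁻¹ * g * φ = (τ * φ * τ) * g * (τ * φ * τ)⁻¹ := by
      rw [tpt τ φ hk]; group
    have e2 : (τ * φ * τ) * g * (τ * φ * τ)⁻¹ = τ * (φ * (τ * g * τ⁻¹) * φ⁻¹) * τ⁻¹ := by group
    rw [e, e2, he, conj_alpha M zero infty hne α hα φ hφinfty hφadd hb]
    exact gamma_mem M zero infty α hα τ hτG hτi (phi_ne infty φ hφinfty hb)
  intro g h
  have h2 := d0inv _ h
  have e : φ⁻¹ * (φ * g * φ⁻¹) * φ = g := by group
  rwa [e] at h2

end Main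

end MSAux

/-- Fix distinct `0, ∞ ∈ X`; for `a ≠ ∞` let `α a` be the
unique element of `U_∞` with `0·(α a) = a` (so `a + b = a·α_b`), let `τ ∈ G`
interchange `0` and `∞`, and set `γ_a := τ⁻¹ α_a τ` (in Lean order
`τ * α a * τ⁻¹`).  Let `φ` be an automorphism of `(U, +)` extended to `X` by
`∞·φ = ∞`.  Then there is an automorphism `χ` of `G` with `χ(α_a) = γ_{aφ}`
and `χ(γ_a) = α_{aφ⁻¹}` iff `(φτ)² = id`; moreover, in that case any such `χ`
is involutory and `φ` is an automorphism of the Moufang set, i.e.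
`φ⁻¹ U_x φ = U_{x·φ}` for all `x`. -/
theorem flip_automorphism_iff {X : Type*} (M : MoufangSet X)
    (zero infty : X) (hne : zero ≠ infty)
    (α : X → Equiv.Perm X)
    (hα : ∀ a : X, a ≠ infty → α a ∈ M.U infty ∧ α a zero = a)
    (τ : Equiv.Perm X) (hτG : τ ∈ M.lpg) (hτ0 : τ zero = infty) (hτi : τ infty = zero)
    (φ : Equiv.Perm X) (hφinfty : φ infty = infty)
    (hφadd : ∀ a b : X, a ≠ infty → b ≠ infty → φ (α b a) = α (φ b) (φ a)) :
    ((∃ χ : M.lpg ≃* M.lpg,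
        (∀ a : X, a ≠ infty → ∀ g : M.lpg, (g : Equiv.Perm X) = α a →
          ((χ g : Equiv.Perm X) = τ * α (φ a) * τ⁻¹)) ∧
        (∀ a : X, a ≠ infty → ∀ g : M.lpg, (g : Equiv.Perm X) = τ * α a * τ⁻¹ →
          ((χ g : Equiv.Perm X) = α (φ⁻¹ a)))) ↔
      (∀ x : X, τ (φ (τ (φ x))) = x)) ∧
    ((∀ x : X, τ (φ (τ (φ x))) = x) →
      ((∀ χ : M.lpg ≃* M.lpg,
        ((∀ a : X, a ≠ infty → ∀ g : M.lpg, (g : Equiv.Perm X) = α a →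
          ((χ g : Equiv.Perm X) = τ * α (φ a) * τ⁻¹)) ∧
        (∀ a : X, a ≠ infty → ∀ g : M.lpg, (g : Equiv.Perm X) = τ * α a * τ⁻¹ →
          ((χ g : Equiv.Perm X) = α (φ⁻¹ a)))) →
        ∀ g : M.lpg, χ (χ g) = g) ∧
      (∀ x : X, Subgroup.map (MulAut.conj φ).toMonoidHom (M.U x) = M.U (φ x)))) := by
  constructor
  · constructor
    · rintro ⟨χ, hχ1, hχ2⟩ x
      obtain ⟨g, hg, hg1⟩ := MSAux.exists_nontrivial M zero infty hne τ hτG hτ0 x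
      have m1 := MSAux.chi_mem M zero infty hne α hα τ hτG hτ0 hτi φ hφinfty χ hχ1 hχ2 x
        ⟨g, MSAux.mem_lpg M hg⟩ hg
      have m2 := MSAux.chi_mem M zero infty hne α hα τ hτG hτ0 hτi φ hφinfty χ hχ1 hχ2
        (τ (φ x)) (χ ⟨g, MSAux.mem_lpg M hg⟩) m1
      rw [MSAux.chi_invol M zero infty hne α hα τ hτG hτ0 hτi φ hφinfty χ hχ1 hχ2
        ⟨g, MSAux.mem_lpg M hg⟩] at m2
      exact (MSAux.fixed_unique M m2 hg1 (M.fixes x g hg)).symm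
    · intro hk
      have hσ2 := MSAux.sig_sq τ φ hk
      have hnorm := MSAux.sig_norm M zero infty hne α hα τ hτG hτ0 hτi φ hφinfty hφadd hk
      let χ₀ : M.lpg ≃* M.lpg :=
        { toFun := fun g => ⟨(τ * φ) * g * (τ * φ)⁻¹, hnorm g g.2⟩
          invFun := fun g => ⟨(τ * φ) * g * (τ * φ)⁻¹, hnorm g g.2⟩
          left_inv := fun g => Subtype.ext (MSAux.conj_conj (τ * φ) hσ2 g)
          right_inv := fun g => Subtype.ext (MSAux.conj_conj (τ * φ) hσ2 g)
          map_mul' := fun g h => Subtype.ext (by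
            show (τ * φ) * ((g : Equiv.Perm X) * (h : Equiv.Perm X)) * (τ * φ)⁻¹ =
              ((τ * φ) * (g : Equiv.Perm X) * (τ * φ)⁻¹) *
              ((τ * φ) * (h : Equiv.Perm X) * (τ * φ)⁻¹)
            group) }
      have hval : ∀ g : M.lpg, (χ₀ g : Equiv.Perm X) = (τ * φ) * g * (τ * φ)⁻¹ :=
        fun g => rfl
      refine ⟨χ₀, ?_, ?_⟩
      · intro a ha g hg
        rw [hval, hg]
        exact MSAux.conj_sigma_alpha M zero infty hne α hα τ φ hφinfty hφadd ha
      · intro a ha g hg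
        rw [hval, hg]
        exact MSAux.conj_sigma_gamma M zero infty hne α hα τ φ hφinfty hφadd hk ha
  · intro hk
    constructor
    · rintro χ ⟨hχ1, hχ2⟩
      exact MSAux.chi_invol M zero infty hne α hα τ hτG hτ0 hτi φ hφinfty χ hχ1 hχ2
    · intro x
      apply MSAux.map_conj_eq
      intro g
      by_cases hxi : x = infty
      · rw [hxi, hφinfty]
        constructor
        · intro hg
          obtain ⟨hb, he⟩ := MSAux.mem_Uinfty_eq M zero infty hne α hα hg
          rw [he, MSAux.conj_alpha M zero infty hne α hα φ hφinfty hφadd hb]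
          exact (hα _ (MSAux.phi_ne infty φ hφinfty hb)).1
        · intro hg
          obtain ⟨hb, he⟩ := MSAux.mem_Uinfty_eq M zero infty hne α hα hg
          have e : g = φ⁻¹ * (φ * g * φ⁻¹) * φ := by group
          rw [e, he, MSAux.conj_alpha_inv M zero infty hne α hα φ hφinfty hφadd hb]
          exact (hα _ (MSAux.phi_inv_ne infty φ hφinfty hb)).1
      · have hαx := hα x hxi
        have hxz : (α x)⁻¹ x = zero := by
          rw [Equiv.Perm.inv_eq_iff_eq]; exact hαx.2.symm
        have hφx := MSAux.phi_ne infty φ hφinfty hxi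
        have hαφx := hα (φ x) hφx
        have hφxz : (α (φ x))⁻¹ (φ x) = zero := by
          rw [Equiv.Perm.inv_eq_iff_eq]; exact hαφx.2.symm
        have e : φ * ((α x)⁻¹ * g * α x) * φ⁻¹ =
            (α (φ x))⁻¹ * (φ * g * φ⁻¹) * α (φ x) := by
          rw [← MSAux.conj_alpha M zero infty hne α hα φ hφinfty hφadd hxi]
          group
        constructor
        · intro hg
          have h1 : (α x)⁻¹ * g * α x ∈ M.U zero := by
            have h := (MSAux.conj_iff M (inv_mem (MSAux.mem_lpg M hαx.1)) x g).1 hg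
            rwa [inv_inv, hxz] at h
          refine (MSAux.conj_iff M (inv_mem (MSAux.mem_lpg M hαφx.1)) (φ x)
            (φ * g * φ⁻¹)).2 ?_
          rw [inv_inv, hφxz, ← e]
          exact MSAux.d0fwd M zero infty hne α hα τ hτG hτ0 hτi φ hφinfty hφadd hk _ h1
        · intro hg
          have h1 : (α (φ x))⁻¹ * (φ * g * φ⁻¹) * α (φ x) ∈ M.U zero := by
            have h := (MSAux.conj_iff M (inv_mem (MSAux.mem_lpg M hαφx.1)) (φ x)
              (φ * g * φ⁻¹)).1 hg
            rwa [inv_inv, hφxz] at h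
          rw [← e] at h1
          have h2 := MSAux.d0bwd M zero infty hne α hα τ hτG hτ0 hτi φ hφinfty hφadd hk _ h1
          refine (MSAux.conj_iff M (inv_mem (MSAux.mem_lpg M hαx.1)) x g).2 ?_
          rw [inv_inv, hxz]
          exact h2
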